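/- Let G be a locally compact abelian group with Haar measure μ, let Q ⊆ G be a symmetric compact neighborhood of 0, and let S ⊆ G satisfy D̄(#|_S;μ) = ρ ∈ (0,∞). Then there exists a finite disjoint partition S = S₁ ∪ … ∪ S_n such that (S_j − S_j) ∩ Q = {0} for every j = 1, …, n. -/

import Mathlib

open MeasureTheory Set Pointwise Filter ENNReal

/-- The uniform asymptotic upper density of a measure `ν` with respect to `μ`:
`inf` over nonempty compact sets `C` of `sup` over Borel sets `V` with compact
closure of `ν V / μ (C + V)`, where `C + V` is a Minkowski sum. -/
noncomputable def uaud {G : Type*} [AddCommGroup G] [TopologicalSpace G] [MeasurableSpace G]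
    (ν μ : Measure G) : ℝ≥0∞ :=
  ⨅ C ∈ {C : Set G | IsCompact C ∧ C.Nonempty},
    ⨆ V ∈ {V : Set G | MeasurableSet V ∧ IsCompact (closure V)},
      ν V / μ (C + V)

/-- The counting measure of the set `S`: the sum of Dirac measures at the points of `S`,
so that `countOn S V = #(S ∩ V)` for measurable `V`. -/
noncomputable def countOn {G : Type*} [MeasurableSpace G] (S : Set G) : Measure G :=
  Measure.sum (fun s : S => Measure.dirac (s : G))


/-- Counting lower bound. -/
lemma le_countOn {G : Type*} [MeasurableSpace G] {S V : Set G} (hV : MeasurableSet V)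
    {m : ℕ} (f : Fin m → G) (hf : Function.Injective f) (hfm : ∀ k, f k ∈ S ∩ V) :
    (m : ℝ≥0∞) ≤ countOn S V := by
  rw [countOn, Measure.sum_apply _ hV]
  have hg : Function.Injective (fun k : Fin m => (⟨f k, (hfm k).1⟩ : S)) := by
    intro a b hab
    exact hf (congrArg Subtype.val hab)
  calc (m : ℝ≥0∞) = ∑' _ : Fin m, 1 := by simp [tsum_fintype]
    _ = ∑' k : Fin m, Measure.dirac (f k) V := by
        congr 1; ext k
        rw [Measure.dirac_apply' _ hV, Set.indicator_of_mem (hfm k).2]; rfl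
    _ ≤ ∑' s : S, Measure.dirac (s : G) V :=
        ENNReal.tsum_comp_le_tsum_of_injective hg _

/-- Zorn: maximal Q-separated subsets exist. -/
lemma exists_maxSep {G : Type*} [AddCommGroup G] (Q : Set G) (hQsymm : Q = -Q) (R : Set G) :
    ∃ M, M ⊆ R ∧ (∀ x ∈ M, ∀ y ∈ M, x - y ∈ Q → x = y) ∧
      ∀ x ∈ R, x ∉ M → ∃ y ∈ M, x - y ∈ Q ∧ x ≠ y := by
  have hz : ∀ c ⊆ {A : Set G | A ⊆ R ∧ ∀ x ∈ A, ∀ y ∈ A, x - y ∈ Q → x = y},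
      IsChain (· ⊆ ·) c → ∃ ub ∈ {A : Set G | A ⊆ R ∧ ∀ x ∈ A, ∀ y ∈ A, x - y ∈ Q → x = y},
        ∀ s ∈ c, s ⊆ ub := by
    intro c hc hchain
    refine ⟨R ∩ ⋃₀ c ∪ ∅, ⟨?_, ?_⟩, ?_⟩
    · simp [inter_subset_left]
    · rintro a ha b hb hab
      simp only [union_empty, mem_inter_iff, mem_sUnion] at ha hb
      obtain ⟨-, A, hAc, haA⟩ := ha
      obtain ⟨-, B, hBc, hbB⟩ := hb
      rcases hchain.total hAc hBc with h | h
      · exact (hc hBc).2 a (h haA) b hbB hab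
      · exact (hc hAc).2 a haA b (h hbB) hab
    · intro s hs
      simp only [union_empty]
      exact subset_inter (hc hs).1 (subset_sUnion_of_mem hs)
  obtain ⟨M, hM⟩ := zorn_subset {A : Set G | A ⊆ R ∧ ∀ x ∈ A, ∀ y ∈ A, x - y ∈ Q → x = y} hz
  refine ⟨M, hM.prop.1, hM.prop.2, ?_⟩
  intro x hxR hxM
  by_contra hno
  push_neg at hno
  have hins : insert x M ∈ {A : Set G | A ⊆ R ∧ ∀ x ∈ A, ∀ y ∈ A, x - y ∈ Q → x = y} := by
    constructor
    · exact insert_subset hxR hM.prop.1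
    · rintro a (rfl | haM) b (rfl | hbM) hab
      · rfl
      · exact hno b hbM hab
      · have hx : b - a ∈ Q := by
          rw [hQsymm, Set.mem_neg, neg_sub]; exact hab
        exact (hno a haM hx).symm
      · exact hM.prop.2 a haM b hbM hab
  have := hM.2 hins (subset_insert x M) (mem_insert x M)
  exact hxM this


theorem partition_of_finite_density {G : Type*} [AddCommGroup G]
    [TopologicalSpace G] [IsTopologicalAddGroup G] [LocallyCompactSpace G] [T2Space G]
    [MeasurableSpace G] [BorelSpace G]
    (μ : Measure G) [μ.IsAddHaarMeasure]
    (Q : Set G) (hQcomp : IsCompact Q) (hQsymm : Q = -Q) (hQnhds : Q ∈ nhds (0 : G))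
    (S : Set G) (ρ : ℝ≥0∞)
    (hρ : uaud (countOn S) μ = ρ) (hρ0 : 0 < ρ) (hρfin : ρ < ⊤) :
    ∃ (n : ℕ) (T : Fin n → Set G),
      Pairwise (Function.onFun Disjoint T) ∧ (⋃ j, T j) = S ∧
      ∀ j, (T j - T j) ∩ Q = {0} := by
  classical
  have hQ0 : (0 : G) ∈ Q := mem_of_mem_nhds hQnhds
  -- the maximal-separated-set choice function
  choose F hFsub hFsep hFmax using fun R => exists_maxSep Q hQsymm R
  -- the residual sets
  let rem : ℕ → Set G := fun k => Nat.rec S (fun _ R => R \ F R) k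
  have hrem0 : rem 0 = S := rfl
  have hremS : ∀ k, rem (k + 1) = rem k \ F (rem k) := fun k => rfl
  have hremstep : ∀ k, rem (k + 1) ⊆ rem k := fun k => by rw [hremS]; exact diff_subset
  have hremsub : ∀ k, rem k ⊆ S := by
    intro k; induction k with
    | zero => exact hrem0.subset
    | succ k ih => exact (hremstep k).trans ih
  have hremmono : ∀ (a b : ℕ), a ≤ b → rem b ⊆ rem a := by
    intro a b
    induction b with
    | zero =>
      intro hab
      have h0 : a = 0 := Nat.le_zero.mp hab
      subst h0; exact subset_rfl
    | succ b ih =>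
      intro hab
      rcases Nat.lt_or_ge a (b+1) with h | h
      · exact (hremstep b).trans (ih (Nat.lt_succ_iff.mp h))
      · have he : a = b + 1 := le_antisymm hab h
        subst he; exact subset_rfl
  -- disjointness of the pieces
  have hdisj : ∀ {k l : ℕ}, k < l → ∀ z, z ∈ F (rem k) → z ∈ F (rem l) → False := by
    intro k l hkl z hzk hzl
    have h1 : rem l ⊆ rem (k + 1) := hremmono _ _ hkl
    have h2 : z ∈ rem (k + 1) := h1 (hFsub (rem l) hzl)
    rw [hremS] at h2
    exact h2.2 hzk
  -- the covering identity
  have hcover : ∀ k, S \ rem k = ⋃ i, ⋃ (_ : i < k), F (rem i) := by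
    intro k; induction k with
    | zero => simp [hrem0]
    | succ k ih =>
      have h1 : S \ rem (k+1) = (S \ rem k) ∪ F (rem k) := by
        rw [hremS, diff_diff_right, inter_eq_right.mpr ((hFsub _).trans (hremsub k))]
      rw [h1, ih]
      ext g
      simp only [mem_union, mem_iUnion, Nat.lt_succ_iff_lt_or_eq]
      constructor
      · rintro (⟨i, hi, hg⟩ | hg)
        · exact ⟨i, Or.inl hi, hg⟩
        · exact ⟨k, Or.inr rfl, hg⟩
      · rintro ⟨i, hi | rfl, hg⟩
        · exact Or.inl ⟨i, hi, hg⟩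
        · exact Or.inr hg
  -- extract a good compact set C from the density hypothesis
  have h1 : uaud (countOn S) μ < ρ + 1 := by
    rw [hρ]; exact ENNReal.lt_add_right hρfin.ne one_ne_zero
  unfold uaud at h1
  simp only [iInf_lt_iff, mem_setOf_eq] at h1
  obtain ⟨C, ⟨hCcomp, hCne⟩, hsup⟩ := h1
  have hCQcomp : IsCompact (C + Q) := hCcomp.add hQcomp
  set B : ℝ≥0∞ := (ρ + 1) * μ (C + Q) with hBdef
  have hρ1top : ρ + 1 ≠ ⊤ := ENNReal.add_ne_top.2 ⟨hρfin.ne, ENNReal.one_ne_top⟩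
  have hBfin : B ≠ ⊤ := ENNReal.mul_ne_top hρ1top hCQcomp.measure_lt_top.ne
  obtain ⟨N, hN⟩ := ENNReal.exists_nat_gt hBfin
  -- key claim : rem N is empty
  have hremN : rem N = ∅ := by
    rw [eq_empty_iff_forall_notMem]
    intro x hx
    have hxS : x ∈ S := hremsub N hx
    set V : Set G := (fun h => h - x) ⁻¹' Q with hVdef
    have hVhom : V = (Homeomorph.subRight x) ⁻¹' Q := rfl
    have hVcomp : IsCompact V := by
      rw [hVhom, (Homeomorph.subRight x).isCompact_preimage]; exact hQcomp
    have hVmeas : MeasurableSet V := by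
      rw [hVhom]
      exact hQcomp.isClosed.measurableSet.preimage (Homeomorph.subRight x).measurable
    have hVmem : MeasurableSet V ∧ IsCompact (closure V) :=
      ⟨hVmeas, by rw [hVcomp.isClosed.closure_eq]; exact hVcomp⟩
    -- x in the interior of V
    have hxint : x ∈ interior V := by
      rw [hVhom, ← Homeomorph.preimage_interior]
      show x - x ∈ interior Q
      rw [sub_self]
      exact mem_interior_iff_mem_nhds.2 hQnhds
    -- μ (C + V) is positive and finite
    obtain ⟨c, hc⟩ := hCne
    have hpos : 0 < μ (C + V) := by
      refine lt_of_lt_of_le ((isOpen_interior.add_left).measure_pos μ ⟨c + x, add_mem_add hc hxint⟩) ?_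
      exact measure_mono (add_subset_add_left interior_subset)
    have hCV : C + V = (fun h => h + -x) ⁻¹' (C + Q) := by
      ext h
      simp only [mem_preimage, Set.mem_add, hVdef]
      constructor
      · rintro ⟨cc, hcc, v, hv, rfl⟩
        exact ⟨cc, hcc, v - x, hv, by abel⟩
      · rintro ⟨cc, hcc, q, hq, heq⟩
        refine ⟨cc, hcc, q + x, ?_, ?_⟩
        · show q + x - x ∈ Q; simpa using hq
        · calc cc + (q + x) = (cc + q) + x := by abel
            _ = h + -x + x := by rw [heq]
            _ = h := by abel
    have hμCV : μ (C + V) = μ (C + Q) := by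
      rw [hCV, measure_preimage_add_right]
    have hfin : μ (C + V) ≠ ⊤ := by rw [hμCV]; exact hCQcomp.measure_lt_top.ne
    -- the density bound on V
    have hdiv : countOn S V / μ (C + V) < ρ + 1 :=
      lt_of_le_of_lt
        (le_iSup₂ (f := fun (V : Set G) (_ : V ∈ {V : Set G | MeasurableSet V ∧ IsCompact (closure V)}) =>
          countOn S V / μ (C + V)) V hVmem) hsup
    have hcount : countOn S V ≤ B := by
      have := (ENNReal.div_lt_iff (Or.inl hpos.ne') (Or.inl hfin)).1 hdiv
      rw [hBdef, ← hμCV]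
      exact this.le
    -- construct N+1 points of S in V
    have hyk : ∀ k : Fin N, ∃ y ∈ F (rem k), x - y ∈ Q ∧ x ≠ y := by
      intro k
      have hx1 : x ∈ rem ((k : ℕ) + 1) := hremmono _ _ k.isLt hx
      rw [hremS] at hx1
      exact hFmax (rem k) x hx1.1 hx1.2
    choose y hy1 hy2 hy3 using hyk
    have hyV : ∀ k, y k ∈ V := by
      intro k
      show y k - x ∈ Q
      rw [hQsymm, Set.mem_neg, neg_sub]
      exact hy2 k
    have hyS : ∀ k, y k ∈ S := fun k => hremsub k ((hFsub (rem k)) (hy1 k))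
    have hyinj : Function.Injective y := by
      intro a b hab
      by_contra hne
      rcases lt_or_gt_of_ne (fun h => hne (Fin.ext h) : (a : ℕ) ≠ b) with h | h
      · exact hdisj h (y a) (hy1 a) (hab ▸ hy1 b)
      · exact hdisj h (y b) (hy1 b) (hab ▸ hy1 a)
    set f : Fin (N + 1) → G := Fin.cons x y with hfdef
    have hfinj : Function.Injective f := by
      rw [hfdef, Fin.cons_injective_iff]
      exact ⟨fun ⟨k, hk⟩ => hy3 k hk.symm, hyinj⟩
    have hfm : ∀ k, f k ∈ S ∩ V := by
      intro k
      refine Fin.cases ?_ ?_ k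
      · refine ⟨hxS, ?_⟩
        show x - x ∈ Q; rw [sub_self]; exact hQ0
      · intro j; exact ⟨hyS j, hyV j⟩
    have hle : ((N + 1 : ℕ) : ℝ≥0∞) ≤ countOn S V := le_countOn hVmeas f hfinj hfm
    have : ((N + 1 : ℕ) : ℝ≥0∞) < (N : ℝ≥0∞) := lt_of_le_of_lt (hle.trans hcount) hN
    rw [Nat.cast_lt] at this
    omega
  -- assemble the partition
  obtain ⟨n, hn_empty, hn_min'⟩ :=
    Nat.lt_wfRel.wf.has_min {k | rem k = ∅} ⟨N, hremN⟩
  have hn_min : ∀ k, k < n → rem k ≠ ∅ := fun k hk hke => hn_min' k hke hk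
  have hFne : ∀ j : Fin n, (F (rem j)).Nonempty := by
    intro j
    rcases eq_empty_or_nonempty (F (rem j)) with he | hne
    · exfalso
      apply hn_min j j.isLt
      rw [eq_empty_iff_forall_notMem]
      intro z hz
      obtain ⟨w, hw, -⟩ := hFmax (rem j) z hz (by rw [he]; exact notMem_empty z)
      rw [he] at hw
      exact notMem_empty w hw
    · exact hne
  refine ⟨n, fun j => F (rem j), ?_, ?_, ?_⟩
  · intro i j hne
    rcases lt_or_gt_of_ne (fun h => hne (Fin.ext h) : (i : ℕ) ≠ j) with h | h
    · exact Set.disjoint_left.2 fun z hzi hzj => hdisj h z hzi hzj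
    · exact Set.disjoint_left.2 fun z hzi hzj => hdisj h z hzj hzi
  · have : (⋃ j : Fin n, F (rem j)) = ⋃ i, ⋃ (_ : i < n), F (rem i) := by
      ext g
      simp only [mem_iUnion]
      exact ⟨fun ⟨j, hj⟩ => ⟨j, j.isLt, hj⟩, fun ⟨i, hi, hg⟩ => ⟨⟨i, hi⟩, hg⟩⟩
    rw [this, ← hcover n, hn_empty, diff_empty]
  · intro j
    ext g
    simp only [mem_inter_iff, Set.mem_sub, mem_singleton_iff]
    constructor
    · rintro ⟨⟨a, ha, b, hb, rfl⟩, hg⟩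
      rw [hFsep (rem j) a ha b hb hg, sub_self]
    · rintro rfl
      obtain ⟨z, hz⟩ := hFne j
      exact ⟨⟨z, hz, z, hz, sub_self z⟩, hQ0⟩
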